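/- Let V be a real vector space with symmetric bilinear form q, let Sym* V be the symmetric algebra, and suppose there is an algebra structure on A = ⊕_{i=0}^{2n} A^{2i} with A^{2i} ≅ Sym^i V for i ≤ n and A^{2i} ≅ Sym^{2n-i} V for i ≥ n, on which the polarization identity ∫ a^{2n} = λ q(a,a)^n holds. Then for a ∈ V with q(a,a) = 0 and a ≠ 0, the power a^n is nonzero in A^{2n} while a^{n+1} = 0 in A^{2n+2}, provided q is nondegenerate of signature (3, b₂-3) (so there exists b with q(a,b) ≠ 0). -/
import Mathlib
set_option linter.unusedSectionVars false
set_option maxHeartbeats 800000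

private lemma coeff_one_mul_aux (p q : Polynomial ℝ) :
    (p * q).coeff 1 = p.coeff 0 * q.coeff 1 + p.coeff 1 * q.coeff 0 := by
  rw [Polynomial.coeff_mul, Finset.Nat.sum_antidiagonal_eq_sum_range_succ_mk]
  simp [Finset.sum_range_succ]

section Aux
variable {V : Type*} [AddCommGroup V] [Module ℝ V] (q : LinearMap.BilinForm ℝ V)

private def genVal : Option V → V → ℝ := fun o x => o.elim (q x x) (fun v => q x v)
private def genWt : Option V → ℕ := fun o => o.elim 2 (fun _ => 1)
private lemma genWt_pos (o : Option V) : 1 ≤ genWt (V := V) o := by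
  cases o <;> simp [genWt]
private def GenSet (N s : ℕ) : Set (V → ℝ) :=
  {f | ∃ L : List (Option V), (L.map genWt).sum = N ∧ L.countP Option.isSome ≤ s ∧
    f = fun x => (L.map (fun o => genVal q o x)).prod}
private noncomputable def genPol (z x : V) : Option V → Polynomial ℝ
  | none => Polynomial.C (q x x) + Polynomial.C (2 * q x z) * Polynomial.X
      + Polynomial.C (q z z) * Polynomial.X ^ 2
  | some v => Polynomial.C (q x v) + Polynomial.C (q z v) * Polynomial.X
private lemma genPol_coeff_zero (z x : V) (o : Option V) :
    (genPol q z x o).coeff 0 = genVal q o x := by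
  cases o <;> simp [genPol, genVal]
private lemma GenSet_mono {N s s' : ℕ} (h : s ≤ s') : GenSet q N s ⊆ GenSet q N s' :=
  fun _ ⟨L, h1, h2, h3⟩ => ⟨L, h1, le_trans h2 h, h3⟩
private lemma span_mul_gen (o : Option V) {N s N' s' : ℕ}
    (hN : N' = genWt (V := V) o + N) (hs : s + o.elim 0 (fun _ => 1) ≤ s')
    {g : V → ℝ} (hg : g ∈ Submodule.span ℝ (GenSet q N s)) :
    (fun x => genVal q o x * g x) ∈ Submodule.span ℝ (GenSet q N' s') := by
  induction hg using Submodule.span_induction with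
  | mem f hf =>
      obtain ⟨L, h1, h2, rfl⟩ := hf
      refine Submodule.subset_span ⟨o :: L, ?_, ?_, ?_⟩
      · simp [h1, hN]
      · cases o <;> simp_all [List.countP_cons] <;> omega
      · funext x; simp
  | zero =>
      have : (fun x => genVal q o x * (0 : V → ℝ) x) = 0 := by funext x; simp
      rw [this]; exact Submodule.zero_mem _
  | add g h _ _ hg' hh' =>
      have : (fun x => genVal q o x * (g + h) x)
          = (fun x => genVal q o x * g x) + (fun x => genVal q o x * h x) := by
        funext x; simp [mul_add]
      rw [this]; exact Submodule.add_mem _ hg' hh'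
  | smul c g _ hg' =>
      have : (fun x => genVal q o x * (c • g) x) = c • (fun x => genVal q o x * g x) := by
        funext x; simp [Pi.smul_apply, smul_eq_mul]; ring
      rw [this]; exact Submodule.smul_mem _ c hg'

private lemma coeff_zero_prod (z x : V) (L : List (Option V)) :
    ((L.map (genPol q z x)).prod).coeff 0 = (L.map (fun o => genVal q o x)).prod := by
  induction L with
  | nil => simp
  | cons o L ih =>
      simp only [List.map_cons, List.prod_cons, Polynomial.mul_coeff_zero, ih,
        genPol_coeff_zero]

private lemma coeff_one_mem (z : V) :
    ∀ (L : List (Option V)) (N : ℕ), (L.map genWt).sum = N + 1 →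
      (fun x => ((L.map (genPol q z x)).prod).coeff 1) ∈
        Submodule.span ℝ (GenSet q N (L.countP Option.isSome + 1)) := by
  intro L
  induction L with
  | nil => intro N h; simp at h
  | cons o L ih =>
      intro N h
      have hsplit : (fun x => (((o :: L).map (genPol q z x)).prod).coeff 1)
          = (fun x => genVal q o x * ((L.map (genPol q z x)).prod).coeff 1)
            + (fun x => (genPol q z x o).coeff 1 * (L.map (fun o' => genVal q o' x)).prod) := by
        funext x
        simp only [List.map_cons, List.prod_cons, Pi.add_apply]
        rw [coeff_one_mul_aux, genPol_coeff_zero, coeff_zero_prod]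
      rw [hsplit]
      have hwto : genWt (V := V) o + (L.map genWt).sum = N + 1 := by
        simpa using h
      apply Submodule.add_mem
      · -- first piece : genVal o * (coeff 1 of tail product)
        rcases eq_or_ne L [] with rfl | hL
        · have : (fun x => genVal q o x * (([] : List (Option V)).map (genPol q z x)).prod.coeff 1)
              = 0 := by funext x; simp [Polynomial.coeff_one]
          rw [this]; exact Submodule.zero_mem _
        · have hw1 : 1 ≤ (L.map genWt).sum := by
            rcases L with _ | ⟨o', L'⟩
            · exact absurd rfl hL
            · calc 1 ≤ genWt (V := V) o' := genWt_pos o'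
                _ ≤ _ := by simp only [List.map_cons, List.sum_cons]; omega
          obtain ⟨N₂, hN₂⟩ : ∃ N₂, (L.map genWt).sum = N₂ + 1 :=
            ⟨(L.map genWt).sum - 1, by omega⟩
          have hIH := ih N₂ hN₂
          have := span_mul_gen q o (N := N₂) (s := L.countP Option.isSome + 1)
            (N' := N) (s' := (o :: L).countP Option.isSome + 1) ?_ ?_ hIH
          · exact this
          · have := genWt_pos (V := V) o; omega
          · cases o <;> simp [List.countP_cons]
      · -- second piece
        cases o with
        | none =>
            have heq : (fun x => (genPol q z x none).coeff 1 * (L.map (fun o' => genVal q o' x)).prod)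
                = (2 : ℝ) • (fun x => (((some z) :: L).map (fun o' => genVal q o' x)).prod) := by
              funext x
              simp [genPol, genVal, Pi.smul_apply, smul_eq_mul]
              ring
            rw [heq]
            refine Submodule.smul_mem _ _ (Submodule.subset_span ⟨some z :: L, ?_, ?_, rfl⟩)
            · simp only [List.map_cons, List.sum_cons]
              simp only [genWt, Option.elim] at hwto ⊢
              omega
            · simp [List.countP_cons]
        | some v =>
            have heq : (fun x => (genPol q z x (some v)).coeff 1 * (L.map (fun o' => genVal q o' x)).prod)
                = (q z v) • (fun x => (L.map (fun o' => genVal q o' x)).prod) := by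
              funext x
              simp [genPol, genVal, Pi.smul_apply, smul_eq_mul]
            rw [heq]
            refine Submodule.smul_mem _ _ (Submodule.subset_span ⟨L, ?_, ?_, rfl⟩)
            · simp only [genWt, Option.elim] at hwto; omega
            · simp only [List.countP_cons]; omega

private lemma genPol_eval (hsymm : ∀ x y : V, q x y = q y x) (z x : V) (o : Option V) (t : ℝ) :
    (genPol q z x o).eval t = genVal q o (x + t • z) := by
  cases o with
  | none =>
      simp only [genPol, genVal, Option.elim, Polynomial.eval_add, Polynomial.eval_mul,
        Polynomial.eval_C, Polynomial.eval_X, Polynomial.eval_pow, map_add, map_smul,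
        LinearMap.add_apply, LinearMap.smul_apply, smul_eq_mul]
      rw [hsymm z x]; ring
  | some v =>
      simp only [genPol, genVal, Option.elim, Polynomial.eval_add, Polynomial.eval_mul,
        Polynomial.eval_C, Polynomial.eval_X, map_add, map_smul,
        LinearMap.add_apply, LinearMap.smul_apply, smul_eq_mul]
      ring

private lemma polar_step (hsymm : ∀ x y : V, q x y = q y x) (z : V) {M s : ℕ} {F : V → ℝ}
    (hF : F ∈ Submodule.span ℝ (GenSet q (M + 1) s)) :
    ∃ G ∈ Submodule.span ℝ (GenSet q M (s + 1)), ∀ x : V, ∃ R : Polynomial ℝ,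
      (∀ t : ℝ, R.eval t = F (x + t • z)) ∧ R.coeff 1 = G x := by
  induction hF using Submodule.span_induction with
  | mem f hf =>
      obtain ⟨L, h1, h2, rfl⟩ := hf
      refine ⟨_, Submodule.span_mono (GenSet_mono q (by omega))
        (coeff_one_mem q z L M h1), fun x => ⟨(L.map (genPol q z x)).prod, ?_, rfl⟩⟩
      intro t
      rw [Polynomial.eval_list_prod, List.map_map]
      show (List.map (Polynomial.eval t ∘ genPol q z x) L).prod
          = (List.map (fun o => genVal q o (x + t • z)) L).prod
      congr 1
      exact List.map_congr_left fun o _ => genPol_eval q hsymm z x o t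
  | zero => exact ⟨0, Submodule.zero_mem _, fun x => ⟨0, by simp, by simp⟩⟩
  | add f g hf hg ihf ihg =>
      obtain ⟨Gf, hGf, hf'⟩ := ihf
      obtain ⟨Gg, hGg, hg'⟩ := ihg
      refine ⟨Gf + Gg, Submodule.add_mem _ hGf hGg, fun x => ?_⟩
      obtain ⟨Rf, hRf, hRf'⟩ := hf' x
      obtain ⟨Rg, hRg, hRg'⟩ := hg' x
      exact ⟨Rf + Rg, fun t => by simp [hRf t, hRg t], by simp [hRf', hRg']⟩
  | smul c f hf ihf =>
      obtain ⟨Gf, hGf, hf'⟩ := ihf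
      refine ⟨c • Gf, Submodule.smul_mem _ c hGf, fun x => ?_⟩
      obtain ⟨Rf, hRf, hRf'⟩ := hf' x
      refine ⟨Polynomial.C c * Rf, fun t => by simp [hRf t], ?_⟩
      simp [hRf', Pi.smul_apply, smul_eq_mul]

private lemma genspan_eval_zero (a : V) (haa : q a a = 0) {N s : ℕ} (hs : s < N)
    {F : V → ℝ} (hF : F ∈ Submodule.span ℝ (GenSet q N s)) : F a = 0 := by
  have hker : Submodule.span ℝ (GenSet q N s) ≤
      LinearMap.ker (LinearMap.proj (R := ℝ) (φ := fun _ : V => ℝ) a) := by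
    rw [Submodule.span_le]
    rintro f ⟨L, h1, h2, rfl⟩
    simp only [SetLike.mem_coe, LinearMap.mem_ker, LinearMap.proj_apply]
    by_cases hnone : (none : Option V) ∈ L
    · apply List.prod_eq_zero
      exact List.mem_map.mpr ⟨none, hnone, by simp [genVal, haa]⟩
    · exfalso
      have hall : ∀ o ∈ L, (Option.isSome o : Prop) := by
        intro o ho
        cases o with
        | none => exact absurd ho hnone
        | some v => simp
      have hcount : L.countP Option.isSome = L.length :=
        List.countP_eq_length.mpr (fun o ho => by simpa using hall o ho)
      have hwt : (L.map genWt).sum = L.length := by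
        have : L.map genWt = L.map (fun _ => 1) := by
          apply List.map_congr_left
          intro o ho
          cases o with
          | none => exact absurd ho hnone
          | some v => rfl
        rw [this]
        simp [List.map_const']
      omega
  exact hker hF

private lemma intg_poly {A : Type*} [CommRing A] [Algebra ℝ A]
    (ι : V →ₗ[ℝ] A) (intg : A →ₗ[ℝ] ℝ) (c : A) (N : ℕ) (x z : V) :
    ∃ R : Polynomial ℝ, (∀ t : ℝ, R.eval t = intg (c * ι (x + t • z) ^ N)) ∧
      ∀ j, j ≤ N → R.coeff j = (N.choose j : ℝ) * intg (c * ι z ^ j * ι x ^ (N - j)) := by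
  refine ⟨∑ j ∈ Finset.range (N + 1),
    Polynomial.C ((N.choose j : ℝ) * intg (c * ι z ^ j * ι x ^ (N - j))) * Polynomial.X ^ j,
    ?_, ?_⟩
  · intro t
    have hEx : ι (x + t • z) = t • ι z + ι x := by
      rw [map_add, map_smul]; ring
    rw [hEx, add_pow, Finset.mul_sum, map_sum]
    rw [Polynomial.eval_finset_sum]
    refine Finset.sum_congr rfl fun j hj => ?_
    have h1 : c * ((t • ι z) ^ j * ι x ^ (N - j) * (N.choose j : A))
        = (t ^ j * (N.choose j : ℝ)) • (c * (ι z ^ j * ι x ^ (N - j))) := by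
      have hcast : ((N.choose j : ℕ) : A) = algebraMap ℝ A ((N.choose j : ℕ) : ℝ) := by
        simp
      rw [hcast]
      simp only [smul_pow, Algebra.smul_def, map_mul, map_pow]
      ring
    rw [h1, map_smul]
    simp only [Polynomial.eval_mul, Polynomial.eval_C, Polynomial.eval_pow, Polynomial.eval_X,
      smul_eq_mul]
    ring_nf
  · intro j hj
    rw [Polynomial.finset_sum_coeff]
    rw [Finset.sum_eq_single j]
    · rw [Polynomial.coeff_C_mul, Polynomial.coeff_X_pow]
      simp
    · intro i hi hne
      rw [Polynomial.coeff_C_mul, Polynomial.coeff_X_pow]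
      simp [Ne.symm hne]
    · intro hnot
      exact absurd (Finset.mem_range.mpr (by omega)) hnot

end Aux

/-- Structure of the subalgebra of cohomology generated by `H²` (Verbitsky):
let `A` be the (commutative) cohomology algebra, `ι : V → A` the inclusion of
`H²`, `intg : A → ℝ` the integration, satisfying the Fujiki relation
`∫ x^{2n} = λ q(x,x)^n` with `λ > 0`, and suppose the degree-`2(n+1)` part of
the subalgebra generated by `V` is detected by integration against products of
`n - 1` classes from `V` (Poincaré duality on the subalgebra).  Then for a
nonzero isotropic `a ∈ V` (nondegeneracy of `q` of signature `(3, b₂ - 3)`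
provides an isotropic `b` with `q(a,b) ≠ 0`), one has `a^n ≠ 0` and
`a^{n+1} = 0`. -/
theorem stmt_6 {V A : Type*} [AddCommGroup V] [Module ℝ V]
    [CommRing A] [Algebra ℝ A]
    (n : ℕ) (hn : 1 ≤ n)
    (q : LinearMap.BilinForm ℝ V) (hsymm : ∀ x y : V, q x y = q y x)
    (ι : V →ₗ[ℝ] A) (intg : A →ₗ[ℝ] ℝ)
    (lam : ℝ) (hlam : 0 < lam)
    (hFujiki : ∀ x : V, intg (ι x ^ (2 * n)) = lam * (q x x) ^ n)
    (hdual : ∀ x : V,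
      (∀ y : Fin (n - 1) → V, intg (ι x ^ (n + 1) * ∏ i, ι (y i)) = 0) →
        ι x ^ (n + 1) = 0)
    (a : V) (ha : a ≠ 0) (haa : q a a = 0)
    (hb : ∃ b : V, q b b = 0 ∧ q a b ≠ 0) :
    ι a ^ n ≠ 0 ∧ ι a ^ (n + 1) = 0 := by
  obtain ⟨b, hbb, hab⟩ := hb
  constructor
  · -- `ι a ^ n ≠ 0`
    obtain ⟨R, hRe, hRc⟩ := intg_poly ι intg 1 (2 * n) a b
    have hR2 : R = Polynomial.C (lam * (2 * q a b) ^ n) * Polynomial.X ^ n := by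
      apply Polynomial.funext
      intro t
      rw [hRe t, one_mul, hFujiki]
      have hq : q (a + t • b) (a + t • b) = t * (2 * q a b) := by
        simp only [map_add, map_smul, LinearMap.add_apply, LinearMap.smul_apply, smul_eq_mul,
          haa, hbb, hsymm b a]
        ring
      rw [hq]
      simp only [Polynomial.eval_mul, Polynomial.eval_C, Polynomial.eval_pow, Polynomial.eval_X,
        mul_pow]
      ring
    have hc := hRc n (by omega)
    rw [hR2, Polynomial.coeff_C_mul, Polynomial.coeff_X_pow, if_pos rfl, mul_one] at hc
    have h2nn : 2 * n - n = n := by omega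
    rw [h2nn, one_mul] at hc
    intro h0
    rw [h0, mul_zero, map_zero, mul_zero] at hc
    exact mul_ne_zero (ne_of_gt hlam)
      (pow_ne_zero _ (mul_ne_zero two_ne_zero hab)) hc
  · -- `ι a ^ (n+1) = 0`
    have Main : ∀ k, k ≤ n - 1 → ∀ y : Fin k → V,
        (fun x => intg ((∏ i, ι (y i)) * ι x ^ (2 * n - k))) ∈
          Submodule.span ℝ (GenSet q (2 * n - k) k) := by
      intro k
      induction k with
      | zero =>
          intro _ y
          have hfun : (fun x => intg ((∏ i, ι (y i)) * ι x ^ (2 * n - 0)))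
              = lam • (fun x => ((List.replicate n (none : Option V)).map
                  (fun o => genVal q o x)).prod) := by
            funext x
            rw [Fin.prod_univ_zero, one_mul, Nat.sub_zero, hFujiki x]
            simp [List.map_replicate, List.prod_replicate, genVal]
          rw [hfun]
          refine Submodule.smul_mem _ _ (Submodule.subset_span ⟨List.replicate n none, ?_, ?_, rfl⟩)
          · simp only [List.map_replicate, List.sum_replicate, smul_eq_mul, genWt, Option.elim]
            omega
          · rw [Nat.le_zero, List.countP_eq_zero]
            intro o ho
            rw [List.eq_of_mem_replicate ho]
            simp
      | succ k ih =>
          intro hk y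
          have hF := ih (by omega) (fun i : Fin k => y i.castSucc)
          have hM : 2 * n - k = (2 * n - (k + 1)) + 1 := by omega
          rw [hM] at hF
          obtain ⟨G, hG, hGx⟩ := polar_step q hsymm (y (Fin.last k)) hF
          have hNe : (((2 * n - (k + 1)) + 1 : ℕ) : ℝ) ≠ 0 := by
            exact_mod_cast Nat.succ_ne_zero (2 * n - (k + 1))
          have key : ∀ x : V, intg ((∏ i, ι (y i)) * ι x ^ (2 * n - (k + 1)))
              = ((((2 * n - (k + 1)) + 1 : ℕ) : ℝ))⁻¹ * G x := by
            intro x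
            obtain ⟨R, hRe, hRc⟩ := hGx x
            obtain ⟨R', hRe', hRc'⟩ := intg_poly ι intg (∏ i : Fin k, ι (y i.castSucc))
              ((2 * n - (k + 1)) + 1) x (y (Fin.last k))
            have hRR : R' = R := by
              apply Polynomial.funext
              intro t
              rw [hRe' t, hRe t]
            have h1 : G x = (((2 * n - (k + 1)) + 1 : ℕ) : ℝ) *
                intg ((∏ i : Fin k, ι (y i.castSucc)) * ι (y (Fin.last k)) * ι x ^ (2 * n - (k + 1))) := by
              rw [← hRc, ← hRR]
              have := hRc' 1 (by omega)
              rw [Nat.choose_one_right, pow_one, Nat.add_sub_cancel] at this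
              exact this
            have hprod : (∏ i, ι (y i)) = (∏ i : Fin k, ι (y i.castSucc)) * ι (y (Fin.last k)) :=
              Fin.prod_univ_castSucc fun i => ι (y i)
            rw [hprod, h1, inv_mul_cancel_left₀ hNe]
          have hfun : (fun x => intg ((∏ i, ι (y i)) * ι x ^ (2 * n - (k + 1))))
              = ((((2 * n - (k + 1)) + 1 : ℕ) : ℝ))⁻¹ • G := by
            funext x
            rw [key x]
            rfl
          rw [hfun]
          exact Submodule.smul_mem _ _ hG
    apply hdual
    intro y
    have hmem := Main (n - 1) le_rfl y
    have h21 : 2 * n - (n - 1) = n + 1 := by omega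
    rw [h21] at hmem
    have h0 := genspan_eval_zero q a haa (show n - 1 < n + 1 by omega) hmem
    rw [mul_comm]
    exact h0
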